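/- Let p ≥ 7 be a prime with p ≡ 1 (mod 4), and let S be a sequence in Z_p with at least two zero terms and at least three nonzero terms. Then S is a (Q_p,1)-weighted zero-sum sequence. -/

import Mathlib

def Qp (p : ℕ) : Set (ZMod p) := {x | ∃ u : (ZMod p)ˣ, (u : ZMod p) ^ 2 = x}

def Np (p : ℕ) : Set (ZMod p) := {x | IsUnit x ∧ x ∉ Qp p}

section aux
variable (p : ℕ) [Fact p.Prime]

lemma qp_of_ne_zero {x : ZMod p} (hx : x ≠ 0) (hsq : IsSquare x) : x ∈ Qp p := by
  obtain ⟨y, hy⟩ := hsq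
  have hy0 : y ≠ 0 := by rintro rfl; simp at hy; exact hx hy
  exact ⟨Units.mk0 y hy0, by simp [hy, sq]⟩

lemma qp_ne_zero {x : ZMod p} (hx : x ∈ Qp p) : x ≠ 0 := by
  obtain ⟨u, hu⟩ := hx
  rw [← hu]
  exact pow_ne_zero _ (Units.ne_zero u)

lemma qp_isSquare {x : ZMod p} (hx : x ∈ Qp p) : IsSquare x := by
  obtain ⟨u, hu⟩ := hx; exact ⟨u, by rw [← hu, sq]⟩

lemma qp_mul {x y : ZMod p} (hx : x ∈ Qp p) (hy : y ∈ Qp p) : x * y ∈ Qp p := by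
  obtain ⟨u, hu⟩ := hx; obtain ⟨v, hv⟩ := hy
  exact ⟨u * v, by push_cast; rw [mul_pow, hu, hv]⟩

lemma one_mem_qp : (1 : ZMod p) ∈ Qp p := ⟨1, by simp⟩

lemma natCast_ne_zero (hp : 7 ≤ p) {n : ℕ} (hn : n ≠ 0) (hn7 : n < 7) : (n : ZMod p) ≠ 0 := by
  rw [Ne, ZMod.natCast_eq_zero_iff]
  intro h
  have := Nat.le_of_dvd (Nat.pos_of_ne_zero hn) h
  omega

/-- Every element of `ZMod p` is a sum of two nonzero squares when `p ≥ 7`, `p ≡ 1 [MOD 4]`. -/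
lemma sum_two_qp (hp : 7 ≤ p) (hp1 : p % 4 = 1) (d : ZMod p) :
    ∃ w₁ w₂ : ZMod p, w₁ ∈ Qp p ∧ w₂ ∈ Qp p ∧ w₁ + w₂ = d := by
  have h5 : (5 : ZMod p) ≠ 0 := natCast_ne_zero p hp (by norm_num) (by norm_num)
  have h3 : (3 : ZMod p) ≠ 0 := natCast_ne_zero p hp (by norm_num) (by norm_num)
  have h4 : (4 : ZMod p) ≠ 0 := natCast_ne_zero p hp (by norm_num) (by norm_num)
  by_cases hd0 : d = 0
  · have hneg : IsSquare (-1 : ZMod p) := (ZMod.exists_sq_eq_neg_one_iff).2 (by omega)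
    have h1 : (1 : ZMod p) ≠ 0 := one_ne_zero
    refine ⟨1, -1, one_mem_qp p, qp_of_ne_zero p (by simpa using h1) hneg, by simp [hd0]⟩
  by_cases hsq : IsSquare d
  · obtain ⟨e, he⟩ := hsq
    have he0 : e ≠ 0 := by rintro rfl; simp at he; exact hd0 he
    refine ⟨(3 * e / 5) ^ 2, (4 * e / 5) ^ 2, ?_, ?_, ?_⟩
    · exact qp_of_ne_zero p (pow_ne_zero _ (div_ne_zero (mul_ne_zero h3 he0) h5)) ⟨_, sq _⟩
    · exact qp_of_ne_zero p (pow_ne_zero _ (div_ne_zero (mul_ne_zero h4 he0) h5)) ⟨_, sq _⟩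
    · rw [he]; field_simp; ring
  · obtain ⟨a, b, hab⟩ := ZMod.sq_add_sq p d
    have ha : a ≠ 0 := by rintro rfl; exact hsq ⟨b, by rw [← hab]; ring⟩
    have hb : b ≠ 0 := by rintro rfl; exact hsq ⟨a, by rw [← hab]; ring⟩
    exact ⟨a ^ 2, b ^ 2, qp_of_ne_zero p (pow_ne_zero _ ha) ⟨a, sq a⟩,
      qp_of_ne_zero p (pow_ne_zero _ hb) ⟨b, sq b⟩, hab⟩

lemma isSquare_pair {s₁ s₂ s₃ : ZMod p} (h₁ : s₁ ≠ 0) (h₂ : s₂ ≠ 0) (h₃ : s₃ ≠ 0) :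
    IsSquare (s₁ * s₂) ∨ IsSquare (s₁ * s₃) ∨ IsSquare (s₂ * s₃) := by
  have key : ∀ {a b : ZMod p}, a ≠ 0 → b ≠ 0 → ¬IsSquare a → ¬IsSquare b → IsSquare (a * b) := by
    intro a b ha hb hna hnb
    have hab : a * b ≠ 0 := mul_ne_zero ha hb
    rw [← quadraticChar_one_iff_isSquare hab, map_mul,
      quadraticChar_neg_one_iff_not_isSquare.2 hna,
      quadraticChar_neg_one_iff_not_isSquare.2 hnb]
    ring
  by_cases q1 : IsSquare s₁ <;> by_cases q2 : IsSquare s₂ <;> by_cases q3 : IsSquare s₃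
  · exact Or.inl (q1.mul q2)
  · exact Or.inl (q1.mul q2)
  · exact Or.inr (Or.inl (q1.mul q3))
  · exact Or.inr (Or.inr (key h₂ h₃ q2 q3))
  · exact Or.inr (Or.inr (q2.mul q3))
  · exact Or.inr (Or.inl (key h₁ h₃ q1 q3))
  · exact Or.inl (key h₁ h₂ q1 q2)
  · exact Or.inl (key h₁ h₂ q1 q2)

/-- Main construction, given a good pair of nonzero positions and two zero positions. -/
lemma main_aux (hp : 7 ≤ p) (hp1 : p % 4 = 1) (m : ℕ) (S : Fin m → ZMod p)
    (i₁ i₂ j₁ j₂ : Fin m) (hii : i₁ ≠ i₂) (hjj : j₁ ≠ j₂)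
    (hi₁ : S i₁ ≠ 0) (hi₂ : S i₂ ≠ 0) (hj₁ : S j₁ = 0) (hj₂ : S j₂ = 0)
    (hsq : IsSquare (S i₁ * S i₂)) :
    ∃ a : Fin m → ZMod p, (∀ i, a i ∈ Qp p) ∧
      ∑ i, a i * S i = 0 ∧ ∑ i, a i = 0 := by
  have hij11 : i₁ ≠ j₁ := fun h => hi₁ (h ▸ hj₁)
  have hij12 : i₁ ≠ j₂ := fun h => hi₁ (h ▸ hj₂)
  have hij21 : i₂ ≠ j₁ := fun h => hi₂ (h ▸ hj₁)
  have hij22 : i₂ ≠ j₂ := fun h => hi₂ (h ▸ hj₂)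
  -- ratio r = S i₁ / S i₂ is in Qp
  obtain ⟨y, hy⟩ := hsq
  have hy0 : y ≠ 0 := by
    rintro rfl; rw [mul_zero] at hy; exact mul_ne_zero hi₁ hi₂ hy
  have hr : S i₁ * (S i₂)⁻¹ ∈ Qp p := by
    have : S i₁ * (S i₂)⁻¹ = (y * (S i₂)⁻¹) ^ 2 := by
      field_simp
      linear_combination hy
    rw [this]
    exact qp_of_ne_zero p (pow_ne_zero _ (mul_ne_zero hy0 (inv_ne_zero hi₂))) ⟨_, sq _⟩
  set T := ∑ i, S i with hT
  obtain ⟨w₁, w₂, hw₁, hw₂, hw⟩ :=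
    sum_two_qp p hp hp1 ((S i₁ + S i₂ - T) / S i₁)
  set a₁ : ZMod p := w₁ with ha₁
  set a₂ : ZMod p := w₂ * (S i₁ * (S i₂)⁻¹) with ha₂
  have ha₁Q : a₁ ∈ Qp p := hw₁
  have ha₂Q : a₂ ∈ Qp p := qp_mul p hw₂ hr
  have hkey : a₁ * S i₁ + a₂ * S i₂ = S i₁ + S i₂ - T := by
    have : a₁ * S i₁ + a₂ * S i₂ = (w₁ + w₂) * S i₁ := by
      rw [ha₁, ha₂]; field_simp
    rw [this, hw]; field_simp
  obtain ⟨w₃, w₄, hw₃, hw₄, hw34⟩ :=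
    sum_two_qp p hp hp1 (4 - (m : ZMod p) - a₁ - a₂)
  refine ⟨fun k => 1 + (if k = i₁ then a₁ - 1 else 0) + (if k = i₂ then a₂ - 1 else 0)
    + (if k = j₁ then w₃ - 1 else 0) + (if k = j₂ then w₄ - 1 else 0), ?_, ?_, ?_⟩
  · intro k
    rcases eq_or_ne k i₁ with rfl | h1
    · simpa [hii, hij11, hij12] using ha₁Q
    rcases eq_or_ne k i₂ with rfl | h2
    · simpa [hii.symm, hij21, hij22] using ha₂Q
    rcases eq_or_ne k j₁ with rfl | h3
    · simpa [h1, h2, hjj] using hw₃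
    rcases eq_or_ne k j₂ with rfl | h4
    · simpa [h1, h2, hjj.symm] using hw₄
    · simpa [h1, h2, h3, h4] using one_mem_qp p
  · have : ∀ k, (1 + (if k = i₁ then a₁ - 1 else 0) + (if k = i₂ then a₂ - 1 else 0)
        + (if k = j₁ then w₃ - 1 else 0) + (if k = j₂ then w₄ - 1 else 0)) * S k
        = S k + (if k = i₁ then (a₁ - 1) * S k else 0) + (if k = i₂ then (a₂ - 1) * S k else 0)
        + (if k = j₁ then (w₃ - 1) * S k else 0) + (if k = j₂ then (w₄ - 1) * S k else 0) := by
      intro k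
      split_ifs <;> ring
    simp only [this]
    rw [Finset.sum_add_distrib, Finset.sum_add_distrib, Finset.sum_add_distrib,
      Finset.sum_add_distrib, Finset.sum_ite_eq' Finset.univ i₁,
      Finset.sum_ite_eq' Finset.univ i₂, Finset.sum_ite_eq' Finset.univ j₁,
      Finset.sum_ite_eq' Finset.univ j₂]
    simp only [Finset.mem_univ, if_true, hj₁, hj₂, mul_zero, add_zero, ← hT]
    linear_combination hkey
  · rw [Finset.sum_add_distrib, Finset.sum_add_distrib, Finset.sum_add_distrib,
      Finset.sum_add_distrib, Finset.sum_ite_eq' Finset.univ i₁,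
      Finset.sum_ite_eq' Finset.univ i₂, Finset.sum_ite_eq' Finset.univ j₁,
      Finset.sum_ite_eq' Finset.univ j₂]
    simp only [Finset.mem_univ, if_true, Finset.sum_const, Finset.card_univ,
      Fintype.card_fin, nsmul_eq_mul, mul_one]
    linear_combination hw34

end aux

theorem stmt_12 (p : ℕ) [Fact p.Prime] (hp : 7 ≤ p) (hp1 : p % 4 = 1)
    (m : ℕ) (S : Fin m → ZMod p)
    (hz : 2 ≤ (Finset.univ.filter (fun i => S i = 0)).card)
    (hnz : 3 ≤ (Finset.univ.filter (fun i => S i ≠ 0)).card) :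
    ∃ a : Fin m → ZMod p, (∀ i, a i ∈ Qp p) ∧
      ∑ i, a i * S i = 0 ∧ ∑ i, a i = 0 := by
  obtain ⟨tz, htzs, htz⟩ := Finset.exists_subset_card_eq hz
  obtain ⟨tn, htns, htn⟩ := Finset.exists_subset_card_eq hnz
  obtain ⟨j₁, j₂, hjj, rfl⟩ := Finset.card_eq_two.1 htz
  obtain ⟨i₁, i₂, i₃, h12, h13, h23, rfl⟩ := Finset.card_eq_three.1 htn
  have hj₁ : S j₁ = 0 := by
    have := htzs (Finset.mem_insert_self _ _); simpa using (Finset.mem_filter.1 this).2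
  have hj₂ : S j₂ = 0 := by
    have := htzs (Finset.mem_insert_of_mem (Finset.mem_singleton_self j₂))
    simpa using (Finset.mem_filter.1 this).2
  have hi₁ : S i₁ ≠ 0 := by
    have := htns (Finset.mem_insert_self _ _); simpa using (Finset.mem_filter.1 this).2
  have hi₂ : S i₂ ≠ 0 := by
    have := htns (Finset.mem_insert_of_mem (Finset.mem_insert_self i₂ {i₃}))
    simpa using (Finset.mem_filter.1 this).2
  have hi₃ : S i₃ ≠ 0 := by
    have := htns (Finset.mem_insert_of_mem (Finset.mem_insert_of_mem (Finset.mem_singleton_self i₃)))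
    simpa using (Finset.mem_filter.1 this).2
  rcases isSquare_pair p hi₁ hi₂ hi₃ with h | h | h
  · exact main_aux p hp hp1 m S i₁ i₂ j₁ j₂ h12 hjj hi₁ hi₂ hj₁ hj₂ h
  · exact main_aux p hp hp1 m S i₁ i₃ j₁ j₂ h13 hjj hi₁ hi₃ hj₁ hj₂ h
  · exact main_aux p hp hp1 m S i₂ i₃ j₁ j₂ h23 hjj hi₂ hi₃ hj₁ hj₂ h
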